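/- Let A be a C*-algebra with a positive element s of norm 1 such that sA is dense in A (a strictly positive element). Then the sequence (f_n(s))_{n≥1}, where f_n is the piecewise-linear function as above applied via continuous functional calculus, is an approximate unit for A satisfying f_{n+1}(s) f_n(s) = f_n(s) for all n. -/
import Mathlib

/-- The piecewise-linear function `f_n`. -/
noncomputable def pwf (n : ℕ) (t : ℝ) : ℝ :=
  if t ≤ 1 / ((n : ℝ) + 1) then 0
  else if t ≤ 1 / (n : ℝ) then (n : ℝ) * ((n : ℝ) + 1) * t - (n : ℝ)
  else 1

lemma pwf_eq {n : ℕ} (hn : 1 ≤ n) :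
    pwf n = fun t => max 0 (min 1 ((n : ℝ) * ((n : ℝ) + 1) * t - n)) := by
  have hN : (1 : ℝ) ≤ (n : ℝ) := by exact_mod_cast hn
  have hN0 : (0 : ℝ) < (n : ℝ) := by linarith
  have hN1 : (0 : ℝ) < (n : ℝ) + 1 := by linarith
  funext t
  unfold pwf
  split_ifs with h1 h2
  · have h1' : t * ((n : ℝ) + 1) ≤ 1 := (le_div_iff₀ hN1).mp h1
    exact (max_eq_left ((min_le_right _ _).trans (by nlinarith))).symm
  · push_neg at h1
    have h1' : 1 < t * ((n : ℝ) + 1) := (div_lt_iff₀ hN1).mp h1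
    have h2' : t * (n : ℝ) ≤ 1 := (le_div_iff₀ hN0).mp h2
    rw [min_eq_right (by nlinarith), max_eq_right (by nlinarith)]
  · push_neg at h1 h2
    have h2' : 1 < t * (n : ℝ) := (div_lt_iff₀ hN0).mp h2
    rw [min_eq_left (by nlinarith), max_eq_right zero_le_one]

lemma pwf_cont {n : ℕ} (hn : 1 ≤ n) : Continuous (pwf n) := by
  rw [pwf_eq hn]
  fun_prop

lemma pwf_zero (n : ℕ) : pwf n 0 = 0 := by
  unfold pwf
  rw [if_pos (by positivity)]

lemma pwf_mem {n : ℕ} (hn : 1 ≤ n) (t : ℝ) : pwf n t ∈ Set.Icc (0:ℝ) 1 := by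
  rw [pwf_eq hn]
  exact ⟨le_max_left _ _, max_le (by norm_num) (min_le_left _ _)⟩

lemma pwf_eq_one {n : ℕ} {t : ℝ} (hn : 1 ≤ n) (h : 1 / (n : ℝ) < t) : pwf n t = 1 := by
  have hN : (1:ℝ) ≤ (n : ℝ) := by exact_mod_cast hn
  have hN0 : (0 : ℝ) < (n : ℝ) := by linarith
  have h1 : 1 / ((n:ℝ) + 1) < t := lt_of_le_of_lt (by
    apply div_le_div_of_nonneg_left (by norm_num) hN0 (by linarith)) h
  unfold pwf
  rw [if_neg (not_le.mpr h1), if_neg (not_le.mpr h)]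

lemma pwf_succ_mul (n : ℕ) (t : ℝ) : pwf (n + 1) t * pwf n t = pwf n t := by
  by_cases h : t ≤ 1 / ((n : ℝ) + 1)
  · have : pwf n t = 0 := if_pos h
    rw [this, mul_zero]
  · push_neg at h
    rw [pwf_eq_one (n := n + 1) (by omega) (by push_cast; linarith), one_mul]

/-- If `s` is a strictly positive element of norm one in a C*-algebra `A`, then
`(f_n(s))_{n ≥ 1}` is an approximate unit for `A` with `f_{n+1}(s) f_n(s) = f_n(s)`. -/
theorem stmt1 {A : Type*} [NonUnitalCStarAlgebra A] [PartialOrder A] [StarOrderedRing A]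
    (s : A) (hs : 0 ≤ s) (hnorm : ‖s‖ = 1)
    (hdense : Dense (Set.range fun a : A => s * a)) :
    (∀ n : ℕ, 1 ≤ n → 0 ≤ cfcₙ (pwf n) s ∧ ‖cfcₙ (pwf n) s‖ ≤ 1) ∧
    (∀ a : A, Filter.Tendsto (fun n : ℕ => cfcₙ (pwf n) s * a) Filter.atTop (nhds a)) ∧
    (∀ a : A, Filter.Tendsto (fun n : ℕ => a * cfcₙ (pwf n) s) Filter.atTop (nhds a)) ∧
    (∀ n : ℕ, cfcₙ (pwf (n + 1)) s * cfcₙ (pwf n) s = cfcₙ (pwf n) s) := by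
  have hsa : IsSelfAdjoint s := .of_nonneg hs
  -- the quasispectrum is contained in [0, 1]
  have hσ : ∀ x ∈ quasispectrum ℝ s, x ∈ Set.Icc (0:ℝ) 1 := by
    intro x hx
    refine ⟨quasispectrum_nonneg_of_nonneg s hs x hx, ?_⟩
    have := norm_apply_le_norm_cfcₙ (id : ℝ → ℝ) s hx continuous_id.continuousOn rfl hsa
    rw [cfcₙ_id ℝ s, hnorm] at this
    calc x ≤ ‖(id x : ℝ)‖ := le_abs_self x
    _ ≤ 1 := this
  set e : ℕ → A := fun n => cfcₙ (pwf n) s with he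
  -- part 1
  have part1 : ∀ n : ℕ, 1 ≤ n → 0 ≤ e n ∧ ‖e n‖ ≤ 1 := by
    intro n hn
    constructor
    · exact cfcₙ_nonneg fun x hx => (pwf_mem hn x).1
    · exact norm_cfcₙ_le fun x hx => by
        rw [Real.norm_eq_abs, abs_le]
        exact ⟨by linarith [(pwf_mem hn x).1], (pwf_mem hn x).2⟩
  -- key estimate
  have key : ∀ n : ℕ, 1 ≤ n → ‖e n * s - s‖ ≤ 1 / n := by
    intro n hn
    have hN : (1:ℝ) ≤ (n : ℝ) := by exact_mod_cast hn
    have h1 : e n * s = cfcₙ (fun t : ℝ => pwf n t * t) s := by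
      have h := cfcₙ_mul (pwf n) (id : ℝ → ℝ) s ((pwf_cont hn).continuousOn) (pwf_zero n)
        continuous_id.continuousOn rfl
      rw [cfcₙ_id ℝ s] at h
      simp only [id_eq] at h
      exact h.symm
    have h2 : e n * s - s = cfcₙ (fun t : ℝ => pwf n t * t - t) s := by
      have h := cfcₙ_sub (fun t : ℝ => pwf n t * t) (id : ℝ → ℝ) s
        (((pwf_cont hn).mul continuous_id).continuousOn)
        (by simp [pwf_zero n]) continuous_id.continuousOn rfl
      rw [cfcₙ_id ℝ s] at h
      simp only [id_eq] at h
      rw [h1, ← h]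
    rw [h2]
    apply norm_cfcₙ_le
    intro x hx
    obtain ⟨hx0, hx1⟩ := hσ x hx
    rcases le_or_gt x (1 / (n:ℝ)) with h | h
    · have hm := pwf_mem hn x
      rw [Real.norm_eq_abs, abs_le]
      constructor
      · nlinarith [hm.1, hm.2]
      · nlinarith [hm.1, hm.2]
    · rw [pwf_eq_one hn h, one_mul, sub_self, norm_zero]
      positivity
  -- convergence of `e n * s`
  have hes : Filter.Tendsto (fun n : ℕ => e n * s) Filter.atTop (nhds s) := by
    rw [tendsto_iff_norm_sub_tendsto_zero]
    apply squeeze_zero' (Filter.Eventually.of_forall fun n => norm_nonneg _)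
      (Filter.eventually_atTop.mpr ⟨1, fun n hn => key n hn⟩)
      tendsto_one_div_atTop_nhds_zero_nat
  -- left convergence
  have left : ∀ a : A, Filter.Tendsto (fun n : ℕ => e n * a) Filter.atTop (nhds a) := by
    intro a
    rw [Metric.tendsto_atTop]
    intro ε hε
    obtain ⟨y, ⟨b, rfl⟩, hy⟩ := hdense.exists_dist_lt a (by positivity : (0:ℝ) < ε / 3)
    have hsb : Filter.Tendsto (fun n : ℕ => e n * (s * b)) Filter.atTop (nhds (s * b)) := by
      simpa only [mul_assoc] using hes.mul_const b
    rw [Metric.tendsto_atTop] at hsb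
    obtain ⟨N, hN⟩ := hsb (ε / 3) (by positivity)
    refine ⟨max N 1, fun n hn => ?_⟩
    have hn1 : 1 ≤ n := le_trans (le_max_right N 1) hn
    have hnN : N ≤ n := le_trans (le_max_left N 1) hn
    have hb1 : ‖e n * a - e n * (s * b)‖ ≤ ‖a - s * b‖ := by
      rw [← mul_sub]
      calc ‖e n * (a - s * b)‖ ≤ ‖e n‖ * ‖a - s * b‖ := norm_mul_le _ _
      _ ≤ 1 * ‖a - s * b‖ := by
          apply mul_le_mul_of_nonneg_right (part1 n hn1).2 (norm_nonneg _)
      _ = ‖a - s * b‖ := one_mul _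
    have hd1 : ‖a - s * b‖ < ε / 3 := by
      rw [← dist_eq_norm]; exact hy
    have hd2 : ‖e n * (s * b) - s * b‖ < ε / 3 := by
      rw [← dist_eq_norm]; exact hN n hnN
    rw [dist_eq_norm]
    calc ‖e n * a - a‖ = ‖(e n * a - e n * (s * b)) + (e n * (s * b) - s * b) + (s * b - a)‖ := by
          congr 1
          abel
    _ ≤ ‖e n * a - e n * (s * b)‖ + ‖e n * (s * b) - s * b‖ + ‖s * b - a‖ :=
        norm_add₃_le
    _ < ε / 3 + ε / 3 + ε / 3 := by
        rw [norm_sub_rev (s * b) a]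
        exact add_lt_add (add_lt_add (hb1.trans_lt hd1) hd2) hd1
    _ = ε := by ring
  -- right convergence
  have hesa : ∀ n, IsSelfAdjoint (e n) := fun n => cfcₙ_predicate (pwf n) s
  have right : ∀ a : A, Filter.Tendsto (fun n : ℕ => a * e n) Filter.atTop (nhds a) := by
    intro a
    have : (fun n : ℕ => a * e n) = fun n : ℕ => star (e n * star a) := by
      funext n
      rw [star_mul, star_star, (hesa n).star_eq]
    rw [this]
    simpa using (left (star a)).star
  refine ⟨part1, left, right, ?_⟩
  intro n
  rcases Nat.eq_zero_or_pos n with rfl | hn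
  · have h0 : e 0 = 0 := by
      rw [he]
      calc cfcₙ (pwf 0) s = cfcₙ (fun _ : ℝ => (0:ℝ)) s := by
            apply cfcₙ_congr
            intro x hx
            exact if_pos (by simpa using (hσ x hx).2)
      _ = 0 := by simp
    have h0' : cfcₙ (pwf 0) s = (0 : A) := h0
    rw [h0', mul_zero]
  · have h := cfcₙ_mul (pwf (n+1)) (pwf n) s ((pwf_cont (by omega)).continuousOn)
      (pwf_zero _) ((pwf_cont hn).continuousOn) (pwf_zero _)
    rw [← h]
    exact cfcₙ_congr fun x _ => pwf_succ_mul n x
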